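/- A square 0-1 matrix A satisfies A^k = A (k ≥ 2) if and only if A = 0 or A is permutation similar to a block matrix [[0, X, XPᵀY],[0, P, Y],[0, 0, 0]], where the diagonal zero blocks are square (possibly of size 0), P is a direct sum of basic circulant matrices C_{n_1} ⊕ ⋯ ⊕ C_{n_r} with each n_i dividing k−1, and X, Y are 0-1 matrices such that XPᵀY is also a 0-1 matrix. -/

import Mathlib

open Matrix

/-- A 0-1 matrix over the integers. -/
def IsZeroOne {α β : Type*} (A : Matrix α β ℤ) : Prop :=
  ∀ i j, A i j = 0 ∨ A i j = 1

/-- The m×m basic circulant matrix: entry (i,j) is 1 iff j ≡ i+1 (mod m). -/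
def circ (m : ℕ) : Matrix (Fin m) (Fin m) ℤ :=
  Matrix.of fun i j => if (j : ℕ) = ((i : ℕ) + 1) % m then 1 else 0

/-- The block matrix [[0, X, Z],[0, P, Y],[0, 0, 0]] with square zero diagonal blocks. -/
def blockH {α β γ : Type*} (X : Matrix α β ℤ) (P : Matrix β β ℤ)
    (Y : Matrix β γ ℤ) (Z : Matrix α γ ℤ) : Matrix (α ⊕ β ⊕ γ) (α ⊕ β ⊕ γ) ℤ :=
  Matrix.fromBlocks 0 (Matrix.fromCols X Z) 0 (Matrix.fromBlocks P Y 0 0)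


/-- successor in `Fin m` mod m -/
def nextF {m : ℕ} (a : Fin m) : Fin m := ⟨((a : ℕ) + 1) % m, Nat.mod_lt _ a.pos⟩

def addF {m : ℕ} (j : ℕ) (a : Fin m) : Fin m := ⟨((a : ℕ) + j) % m, Nat.mod_lt _ a.pos⟩

lemma circ_apply {m : ℕ} (a b : Fin m) :
    circ m a b = if b = nextF a then 1 else 0 := by
  simp only [circ, of_apply, nextF]
  congr 1
  simp [Fin.ext_iff]

lemma nextF_injective {m : ℕ} : Function.Injective (nextF (m := m)) := by
  intro a b h
  have h' : ((a : ℕ) + 1) % m = ((b : ℕ) + 1) % m := congrArg Fin.val h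
  have ha : (a : ℕ) + 1 ≤ m := a.isLt
  have hb : (b : ℕ) + 1 ≤ m := b.isLt
  rcases lt_or_eq_of_le ha with ha' | ha' <;> rcases lt_or_eq_of_le hb with hb' | hb'
  · rw [Nat.mod_eq_of_lt ha', Nat.mod_eq_of_lt hb'] at h'
    exact Fin.ext (by omega)
  · rw [Nat.mod_eq_of_lt ha', hb', Nat.mod_self] at h'; omega
  · rw [Nat.mod_eq_of_lt hb', ha', Nat.mod_self] at h'; omega
  · exact Fin.ext (by omega)

lemma circ_mul_transpose {m : ℕ} : circ m * (circ m)ᵀ = 1 := by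
  ext a b
  rw [mul_apply]
  simp only [transpose_apply, circ_apply]
  rcases eq_or_ne a b with rfl | hab
  · rw [Finset.sum_eq_single (nextF a)]
    · simp
    · intro t _ ht; rw [if_neg ht]; ring
    · simp
  · rw [one_apply_ne hab, Finset.sum_eq_zero]
    intro t _
    rcases eq_or_ne t (nextF a) with rfl | h1
    · rw [if_neg (fun h : nextF a = nextF b => hab (nextF_injective h))]; ring
    · rw [if_neg h1]; ring

lemma circ_pow_apply {m : ℕ} (j : ℕ) (a b : Fin m) :
    (circ m ^ j) a b = if b = addF j a then 1 else 0 := by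
  induction j generalizing b with
  | zero =>
      have : addF 0 a = a := Fin.ext (by simp [addF, Nat.mod_eq_of_lt a.isLt])
      rw [pow_zero, this]
      rcases eq_or_ne a b with rfl | h
      · simp
      · rw [one_apply_ne h, if_neg (fun hh => h hh.symm)]
  | succ j ih =>
      rw [pow_succ, mul_apply]
      have key : ∀ t : Fin m, (circ m ^ j) a t * circ m t b
          = if t = addF j a then (if b = nextF t then 1 else 0) else 0 := by
        intro t
        rw [ih, circ_apply]
        split <;> simp
      simp only [key]
      rw [Finset.sum_ite_eq' _ (addF j a)]
      simp only [Finset.mem_univ, if_true]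
      congr 1
      have : nextF (addF j a) = addF (j + 1) a := by
        apply Fin.ext
        show (((a : ℕ) + j) % m + 1) % m = ((a : ℕ) + (j + 1)) % m
        rw [Nat.mod_add_mod, Nat.add_assoc]
      rw [this]

lemma circ_pow_self {m : ℕ} : circ m ^ m = 1 := by
  ext a b
  rw [circ_pow_apply]
  have : addF m a = a := Fin.ext (by simp [addF, Nat.mod_eq_of_lt a.isLt])
  rw [this]
  rcases eq_or_ne a b with rfl | h
  · simp
  · rw [one_apply_ne h, if_neg (fun hh => h hh.symm)]

section blockpow
variable {α β γ : Type*} [Fintype α] [Fintype β] [Fintype γ]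
  [DecidableEq α] [DecidableEq β] [DecidableEq γ]

lemma fromBlocksPY_pow (P : Matrix β β ℤ) (Y : Matrix β γ ℤ) :
    ∀ m : ℕ, 1 ≤ m → (fromBlocks P Y 0 0 : Matrix (β ⊕ γ) (β ⊕ γ) ℤ) ^ m
      = fromBlocks (P ^ m) (P ^ (m - 1) * Y) 0 0 := by
  intro m
  induction m with
  | zero => omega
  | succ m ih =>
    intro _
    rcases Nat.eq_zero_or_pos m with rfl | hm
    · simp
    · rw [pow_succ, ih hm, fromBlocks_multiply]
      have h1 : m - 1 + 1 = m := by omega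
      simp only [Matrix.mul_zero, Matrix.zero_mul, add_zero, zero_add]
      rw [← pow_succ]
      rfl

lemma blockH_pow (X : Matrix α β ℤ) (P : Matrix β β ℤ) (Y : Matrix β γ ℤ) (Z : Matrix α γ ℤ) :
    ∀ m : ℕ, 1 ≤ m → (blockH X P Y Z) ^ m
      = fromBlocks 0 (fromCols X Z * (fromBlocks P Y 0 0 : Matrix (β ⊕ γ) (β ⊕ γ) ℤ) ^ (m - 1)) 0
          ((fromBlocks P Y 0 0) ^ m) := by
  intro m
  induction m with
  | zero => omega
  | succ m ih =>
    intro _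
    rcases Nat.eq_zero_or_pos m with rfl | hm
    · simp [blockH]
    · rw [pow_succ, ih hm, blockH, fromBlocks_multiply]
      have h1 : m - 1 + 1 = m := by omega
      simp only [Matrix.mul_zero, Matrix.zero_mul, add_zero, zero_add]
      rw [Matrix.mul_assoc, ← pow_succ, h1, ← pow_succ]
      rfl

lemma transpose_eq_pow {q : ℕ} (P : Matrix β β ℤ) (hq : 1 ≤ q) (hP : P ^ q = 1)
    (hPt : P * Pᵀ = 1) : Pᵀ = P ^ (q - 1) := by
  have h2 : P ^ (q-1) * P = 1 := by rw [← pow_succ, Nat.sub_add_cancel hq, hP]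
  calc Pᵀ = (P^(q-1) * P) * Pᵀ := by rw [h2, Matrix.one_mul]
    _ = P^(q-1) * (P * Pᵀ) := by rw [Matrix.mul_assoc]
    _ = P^(q-1) := by rw [hPt, Matrix.mul_one]

lemma blockH_pow_eq {q : ℕ} (X : Matrix α β ℤ) (P : Matrix β β ℤ) (Y : Matrix β γ ℤ)
    (Z : Matrix α γ ℤ) (hq : 1 ≤ q) (hP : P ^ q = 1) (hPt : P * Pᵀ = 1) :
    (blockH X P Y Z) ^ (q + 1) = blockH X P Y (X * Pᵀ * Y) := by
  have hMq : (fromBlocks P Y 0 0 : Matrix (β ⊕ γ) (β ⊕ γ) ℤ) ^ q = fromBlocks 1 (Pᵀ * Y) 0 0 := by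
    rw [fromBlocksPY_pow _ _ q hq, hP, transpose_eq_pow P hq hP hPt]
  have hMq1 : (fromBlocks P Y 0 0 : Matrix (β ⊕ γ) (β ⊕ γ) ℤ) ^ (q+1) = fromBlocks P Y 0 0 := by
    rw [pow_succ, hMq, fromBlocks_multiply]
    simp
  rw [blockH_pow _ _ _ _ (q+1) (by omega), Nat.add_sub_cancel, hMq, hMq1,
    fromCols_mul_fromBlocks]
  simp [blockH, Matrix.mul_assoc]

end blockpow

section bdiag
variable {t : ℕ} {ns : Fin t → ℕ}

lemma blockDiagonal'_pow (f : ∀ i, Matrix (Fin (ns i)) (Fin (ns i)) ℤ) (m : ℕ) :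
    (blockDiagonal' f) ^ m = blockDiagonal' (fun i => (f i) ^ m) := by
  induction m with
  | zero => simp only [pow_zero]; exact (blockDiagonal'_one).symm
  | succ m ih =>
      rw [pow_succ, ih, ← blockDiagonal'_mul]
      congr 1

lemma circP_pow_eq_one {q : ℕ} (hq : 1 ≤ q) (hns : ∀ i, ns i ∣ q) :
    (blockDiagonal' fun i => circ (ns i)) ^ q = 1 := by
  rw [blockDiagonal'_pow]
  have : (fun i => circ (ns i) ^ q) = fun i => (1 : Matrix (Fin (ns i)) (Fin (ns i)) ℤ) := by
    funext i
    obtain ⟨c, hc⟩ := hns i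
    rw [hc, pow_mul, circ_pow_self, one_pow]
  rw [this]
  exact blockDiagonal'_one

lemma circP_mul_transpose :
    (blockDiagonal' fun i => circ (ns i)) * (blockDiagonal' fun i => circ (ns i))ᵀ = 1 := by
  rw [blockDiagonal'_transpose, ← blockDiagonal'_mul]
  have : (fun i => circ (ns i) * (circ (ns i))ᵀ)
      = fun i => (1 : Matrix (Fin (ns i)) (Fin (ns i)) ℤ) := by
    funext i; exact circ_mul_transpose
  rw [this]
  exact blockDiagonal'_one

end bdiag

lemma submatrix_pow_equiv {κ ι : Type*} [Fintype ι] [DecidableEq ι]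
    [Fintype κ] [DecidableEq κ]
    (M : Matrix ι ι ℤ) (e : κ ≃ ι) (m : ℕ) :
    (M.submatrix e e) ^ m = (M ^ m).submatrix e e := by
  induction m with
  | zero => simp only [pow_zero]; exact (submatrix_one_equiv e).symm
  | succ m ih => rw [pow_succ, pow_succ, ih, submatrix_mul_equiv]

lemma backward_dir {n k : ℕ} (hk : 2 ≤ k) (A : Matrix (Fin n) (Fin n) ℤ)
    (r s t : ℕ) (ns : Fin t → ℕ) (hns : ∀ i, ns i ∣ k - 1)
    (X : Matrix (Fin r) ((i : Fin t) × Fin (ns i)) ℤ)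
    (Y : Matrix ((i : Fin t) × Fin (ns i)) (Fin s) ℤ)
    (e : Fin n ≃ (Fin r ⊕ ((i : Fin t) × Fin (ns i)) ⊕ Fin s))
    (he : ∀ i j, A i j =
      blockH X (Matrix.blockDiagonal' fun i => circ (ns i)) Y
        (X * (Matrix.blockDiagonal' fun i => circ (ns i))ᵀ * Y) (e i) (e j)) :
    A ^ k = A := by
  set P := Matrix.blockDiagonal' fun i => circ (ns i) with hPdef
  set H := blockH X P Y (X * Pᵀ * Y) with hHdef
  have hq : 1 ≤ k - 1 := by omega
  have hP : P ^ (k - 1) = 1 := circP_pow_eq_one hq hns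
  have hPt : P * Pᵀ = 1 := circP_mul_transpose
  have hHk : H ^ k = H := by
    have := blockH_pow_eq X P Y (X * Pᵀ * Y) hq hP hPt
    rwa [Nat.sub_add_cancel (by omega : 1 ≤ k)] at this
  have hAH : A = H.submatrix e e := by
    ext i j
    exact he i j
  rw [hAH, submatrix_pow_equiv, hHk]

section walks
variable {n : ℕ} {M : Matrix (Fin n) (Fin n) ℤ}

lemma pow_entry_nonneg (hM : ∀ i j, 0 ≤ M i j) : ∀ (m : ℕ) (i j), 0 ≤ (M ^ m) i j := by
  intro m
  induction m with
  | zero =>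
      intro i j
      rcases eq_or_ne i j with rfl | h
      · simp
      · simp [one_apply_ne h]
  | succ m ih =>
      intro i j
      rw [pow_succ, mul_apply]
      exact Finset.sum_nonneg fun t _ => mul_nonneg (ih i t) (hM t j)

lemma pow_comp (hM : ∀ i j, 0 ≤ M i j) {a b : ℕ} {i j l : Fin n}
    (h1 : 1 ≤ (M ^ a) i j) (h2 : 1 ≤ (M ^ b) j l) : 1 ≤ (M ^ (a + b)) i l := by
  rw [pow_add, mul_apply]
  calc (1 : ℤ) = 1 * 1 := by ring
  _ ≤ (M ^ a) i j * (M ^ b) j l :=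
      mul_le_mul h1 h2 (by norm_num) (le_trans zero_le_one h1)
  _ ≤ _ := Finset.single_le_sum (f := fun t => (M ^ a) i t * (M ^ b) t l)
      (fun t _ => mul_nonneg (pow_entry_nonneg hM a i t) (pow_entry_nonneg hM b t l))
      (Finset.mem_univ j)

lemma pow_split (hM : ∀ i j, 0 ≤ M i j) {a b : ℕ} {i l : Fin n}
    (h : 1 ≤ (M ^ (a + b)) i l) : ∃ j, 1 ≤ (M ^ a) i j ∧ 1 ≤ (M ^ b) j l := by
  by_contra hc
  push_neg at hc
  rw [pow_add, mul_apply] at h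
  have : ∀ t ∈ Finset.univ, (M ^ a) i t * (M ^ b) t l = 0 := by
    intro t _
    have h1 := pow_entry_nonneg hM a i t
    have h2 := pow_entry_nonneg hM b t l
    rcases lt_or_ge ((M ^ a) i t) 1 with hlt | hge
    · have : (M ^ a) i t = 0 := by omega
      rw [this, zero_mul]
    · have : (M ^ b) t l = 0 := by have := hc t hge; omega
      rw [this, mul_zero]
  rw [Finset.sum_eq_zero this] at h
  omega

lemma mpow_iterate (hM : ∀ i j, 0 ≤ M i j) {c : ℕ} {i : Fin n}
    (h : 1 ≤ (M ^ c) i i) : ∀ m, 1 ≤ (M ^ (c * m)) i i := by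
  intro m
  induction m with
  | zero => simp
  | succ m ih => rw [Nat.mul_succ]; exact pow_comp hM ih h

def MChain (M : Matrix (Fin n) (Fin n) ℤ) (f : ℕ → Fin n) (ℓ : ℕ) : Prop :=
  ∀ s, s < ℓ → 1 ≤ M (f s) (f (s + 1))

lemma chain_of_pow (hM : ∀ i j, 0 ≤ M i j) {ℓ : ℕ} {i j : Fin n}
    (h : 1 ≤ (M ^ ℓ) i j) : ∃ f, f 0 = i ∧ f ℓ = j ∧ MChain M f ℓ := by
  induction ℓ generalizing j with
  | zero =>
      have : i = j := by
        by_contra hne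
        rw [pow_zero, one_apply_ne hne] at h
        omega
      exact ⟨fun _ => i, rfl, this ▸ rfl, fun s hs => absurd hs (Nat.not_lt_zero s)⟩
  | succ ℓ ih =>
      have h' : 1 ≤ (M ^ (ℓ + 1)) i j := h
      rw [pow_succ] at h'
      have : 1 ≤ (M ^ ℓ * M ^ 1) i j := by rwa [pow_one]
      rw [← pow_add] at this
      obtain ⟨t, ht1, ht2⟩ := pow_split hM this
      obtain ⟨f, hf0, hfl, hfc⟩ := ih ht1
      rw [pow_one] at ht2
      refine ⟨fun s => if s ≤ ℓ then f s else j, by simp [hf0], by simp, ?_⟩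
      intro s hs
      rcases Nat.lt_or_ge s ℓ with hsl | hsl
      · simp only [if_pos (le_of_lt hsl), if_pos (Nat.succ_le_of_lt hsl)]
        exact hfc s hsl
      · have hseq : s = ℓ := by omega
        subst hseq
        simp only [if_pos (le_refl s), if_neg (by omega : ¬ s + 1 ≤ s)]
        rw [hfl]
        exact ht2

lemma pow_of_chain (hM : ∀ i j, 0 ≤ M i j) {f : ℕ → Fin n} {ℓ : ℕ}
    (hc : MChain M f ℓ) : ∀ a b, a ≤ b → b ≤ ℓ → 1 ≤ (M ^ (b - a)) (f a) (f b) := by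
  intro a b hab hbl
  induction b with
  | zero =>
      have : a = 0 := by omega
      subst this
      simp
  | succ b ih =>
      rcases Nat.lt_or_ge a (b + 1) with h | h
      · have hab' : a ≤ b := by omega
        have h1 := ih hab' (by omega)
        have h2 : 1 ≤ M (f b) (f (b + 1)) := hc b (by omega)
        have := pow_comp hM h1 (by rwa [pow_one] : 1 ≤ (M ^ 1) (f b) (f (b + 1)))
        have heq : b - a + 1 = b + 1 - a := by omega
        rwa [heq] at this
      · have : a = b + 1 := by omega
        subst this
        simp
end walks

lemma short_loop {n : ℕ} {M : Matrix (Fin n) (Fin n) ℤ} (hM : ∀ i j, 0 ≤ M i j)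
    {x : Fin n} : ∀ c, 1 ≤ c → 1 ≤ (M ^ c) x x →
    ∃ c', 1 ≤ c' ∧ c' ≤ n ∧ 1 ≤ (M ^ c') x x := by
  intro c
  induction c using Nat.strong_induction_on with
  | _ c ih =>
    intro hc1 hcx
    rcases le_or_gt c n with hcn | hcn
    · exact ⟨c, hc1, hcn, hcx⟩
    · obtain ⟨f, hf0, hfc, hchain⟩ := chain_of_pow hM hcx
      have hcard : Fintype.card (Fin n) < Fintype.card (Fin (n + 1)) := by simp
      obtain ⟨a, b, hab, heq⟩ :=
        Fintype.exists_ne_map_eq_of_card_lt (fun s : Fin (n + 1) => f s.val) hcard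
      -- wlog a < b
      rcases Ne.lt_or_gt hab with hlt | hlt
      case _ =>
        have h1 : 1 ≤ (M ^ ((a : ℕ) - 0)) (f 0) (f a) := pow_of_chain hM hchain 0 a (by omega) (by omega)
        have h2 : 1 ≤ (M ^ (c - (b : ℕ))) (f b) (f c) := pow_of_chain hM hchain b c (by omega) (by omega)
        rw [hf0] at h1; rw [hfc] at h2
        rw [heq] at h1
        have h3 := pow_comp hM h1 h2
        have hlen1 : 1 ≤ (a : ℕ) - 0 + (c - (b : ℕ)) := by omega
        have hlen2 : (a : ℕ) - 0 + (c - (b : ℕ)) < c := by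
          have := a.isLt; have := b.isLt; omega
        exact ih _ hlen2 hlen1 h3
      case _ =>
        have h1 : 1 ≤ (M ^ ((b : ℕ) - 0)) (f 0) (f b) := pow_of_chain hM hchain 0 b (by omega) (by omega)
        have h2 : 1 ≤ (M ^ (c - (a : ℕ))) (f a) (f c) := pow_of_chain hM hchain a c (by omega) (by omega)
        rw [hf0] at h1; rw [hfc] at h2
        rw [← heq] at h1
        have h3 := pow_comp hM h1 h2
        have hlen1 : 1 ≤ (b : ℕ) - 0 + (c - (a : ℕ)) := by omega
        have hlen2 : (b : ℕ) - 0 + (c - (a : ℕ)) < c := by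
          have := a.isLt; have := b.isLt; omega
        exact ih _ hlen2 hlen1 h3

section forward
variable {n k : ℕ} {A : Matrix (Fin n) (Fin n) ℤ}

lemma zo_nonneg (h01 : IsZeroOne A) : ∀ i j, 0 ≤ A i j := by
  intro i j; rcases h01 i j with h | h <;> omega

lemma pow_periodic (hk : 2 ≤ k) (hA : A ^ k = A) :
    ∀ m, A ^ (1 + m * (k - 1)) = A := by
  intro m
  induction m with
  | zero => simp
  | succ m ih =>
      have h1 : 1 + (m + 1) * (k - 1) = (1 + m * (k - 1)) + (k - 1) := by ring
      rw [h1, pow_add, ih]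
      have h2 : A * A ^ (k - 1) = A ^ k := by
        rw [← pow_succ']
        congr 1
        omega
      rw [h2, hA]

/-- helper: sum over univ equals one term, all nonneg, forces others zero -/
lemma sum_eq_term_zero {g : Fin n → ℤ} (hg : ∀ t, 0 ≤ g t) {x : Fin n}
    (h : ∑ t, g t = g x) : ∀ t, t ≠ x → g t = 0 := by
  intro t ht
  have h1 : ∑ t ∈ Finset.univ.erase x, g t = 0 := by
    have := Finset.add_sum_erase Finset.univ g (Finset.mem_univ x)
    omega
  have h2 := (Finset.sum_eq_zero_iff_of_nonneg (fun t _ => hg t)).mp h1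
  exact h2 t (Finset.mem_erase.mpr ⟨ht, Finset.mem_univ t⟩)


variable (hk : 2 ≤ k) (h01 : IsZeroOne A) (hA : A ^ k = A)

section core
variable {N : ℕ} {B : Matrix (Fin n) (Fin n) ℤ}

-- E2-type rigidity
lemma rigid_AB (h01 : IsZeroOne A) (hAB : A * B = A) (hBnn : ∀ i j, 0 ≤ B i j)
    {x j : Fin n} (hxj : A x j = 1) (hjj : B j j = 1) :
    ∀ t, t ≠ j → A x t * B t j = 0 := by
  have hsum : ∑ t, A x t * B t j = (fun t => A x t * B t j) j := by
    simp only [hjj, mul_one]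
    rw [← mul_apply, hAB]
  exact sum_eq_term_zero (fun t => mul_nonneg (zo_nonneg h01 x t) (hBnn t j)) hsum

lemma rigid_BA (h01 : IsZeroOne A) (hBA : B * A = A) (hBnn : ∀ i j, 0 ≤ B i j)
    {x j : Fin n} (hxj : A x j = 1) (hxx : B x x = 1) :
    ∀ t, t ≠ x → B x t * A t j = 0 := by
  have hsum : ∑ t, B x t * A t j = (fun t => B x t * A t j) x := by
    simp only [hxx, one_mul]
    rw [← mul_apply, hBA]
  exact sum_eq_term_zero (fun t => mul_nonneg (hBnn x t) (zo_nonneg h01 t j)) hsum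

/-- Flor-type rigidity for nonnegative integer idempotents. -/
lemma flor (hBnn : ∀ i j, 0 ≤ B i j) (hBB : B * B = B)
    (hBdiag : ∀ i, B i i = 0 ∨ B i i = 1)
    {j : Fin n} (hjj : B j j = 0) {u w : Fin n} (hu : 1 ≤ B u j) (hw : 1 ≤ B j w) :
    False := by
  have hBpow : ∀ m, 1 ≤ m → B ^ m = B := by
    intro m
    induction m with
    | zero => omega
    | succ m ih =>
        intro _
        rcases Nat.eq_zero_or_pos m with rfl | hm
        · rw [pow_one]
        · rw [pow_succ, ih hm, hBB]
  -- chain of length n+1 from j to w in B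
  have hw' : 1 ≤ (B ^ (n + 1)) j w := by rw [hBpow (n+1) (by omega)]; exact hw
  obtain ⟨f, hf0, hfl, hchain⟩ := chain_of_pow hBnn hw'
  obtain ⟨a, b, hab, heq⟩ :=
    Fintype.exists_ne_map_eq_of_card_lt (fun s : Fin (n + 2) => f s.val)
      (by simp only [Fintype.card_fin]; omega)
  -- get z in chain with B z z = 1 and 1 ≤ B j z
  have key : ∀ (a b : Fin (n+2)), a < b → f a.val = f b.val →
      ∃ z : Fin n, B z z = 1 ∧ 1 ≤ B j z := by
    intro a b hlt heq
    refine ⟨f a.val, ?_, ?_⟩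
    · have h1 : 1 ≤ (B ^ ((b : ℕ) - (a : ℕ))) (f a.val) (f b.val) :=
        pow_of_chain hBnn hchain a.val b.val (by omega) (by have := b.isLt; omega)
      rw [← heq, hBpow _ (by omega)] at h1
      rcases hBdiag (f a.val) with h | h
      · rw [h] at h1; omega
      · exact h
    · -- a ≥ 1 since otherwise z = j has B j j = 1
      have h1 : 1 ≤ (B ^ ((b : ℕ) - (a : ℕ))) (f a.val) (f b.val) :=
        pow_of_chain hBnn hchain a.val b.val (by omega) (by have := b.isLt; omega)
      rw [← heq, hBpow _ (by omega)] at h1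
      rcases Nat.eq_zero_or_pos a.val with ha0 | ha0
      · exfalso
        rw [ha0, hf0] at h1
        rcases hBdiag j with h | h
        · rw [h] at h1; omega
        · rw [h] at hjj; omega
      · have h2 : 1 ≤ (B ^ ((a : ℕ) - 0)) (f 0) (f a.val) :=
          pow_of_chain hBnn hchain 0 a.val (by omega) (by have := a.isLt; omega)
        rw [hf0, hBpow _ (by omega)] at h2
        exact h2
  have hz : ∃ z : Fin n, B z z = 1 ∧ 1 ≤ B j z := by
    rcases Ne.lt_or_gt hab with hlt | hlt
    · exact key a b hlt heq
    · exact key b a hlt heq.symm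
  obtain ⟨z, hzz, hjz⟩ := hz
  have hjzne : j ≠ z := fun h => by rw [← h] at hzz; omega
  have huz : 1 ≤ B u z := by
    have : (B * B) u z = B u z := by rw [hBB]
    rw [mul_apply] at this
    have hle : B u j * B j z ≤ ∑ t, B u t * B t z := by
      have := Finset.single_le_sum (f := fun t => B u t * B t z)
        (fun t _ => mul_nonneg (hBnn u t) (hBnn t z)) (Finset.mem_univ j)
      exact this
    nlinarith [hBnn u j, hBnn j z]
  have hfinal : (B * B) u z = B u z := by rw [hBB]
  rw [mul_apply] at hfinal
  have hpair : B u j * B j z + B u z * B z z ≤ ∑ t, B u t * B t z := by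
    have hsub : ({j, z} : Finset (Fin n)) ⊆ Finset.univ := Finset.subset_univ _
    have := Finset.sum_le_sum_of_subset_of_nonneg hsub
      (fun t _ _ => mul_nonneg (hBnn u t) (hBnn t z))
    rwa [Finset.sum_pair hjzne] at this
  rw [hzz, mul_one] at hpair
  nlinarith [hBnn u j, hBnn j z]
end core

section blockHapp
variable {α β γ : Type*} (X : Matrix α β ℤ) (P : Matrix β β ℤ) (Y : Matrix β γ ℤ)
  (Z : Matrix α γ ℤ)

lemma blockH_ll (a a') : blockH X P Y Z (Sum.inl a) (Sum.inl a') = 0 := rfl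
lemma blockH_lm (a b') : blockH X P Y Z (Sum.inl a) (Sum.inr (Sum.inl b')) = X a b' := rfl
lemma blockH_lr (a w') : blockH X P Y Z (Sum.inl a) (Sum.inr (Sum.inr w')) = Z a w' := rfl
lemma blockH_ml (b a') : blockH X P Y Z (Sum.inr (Sum.inl b)) (Sum.inl a') = 0 := rfl
lemma blockH_mm (b b') : blockH X P Y Z (Sum.inr (Sum.inl b)) (Sum.inr (Sum.inl b')) = P b b' := rfl
lemma blockH_mr (b w') : blockH X P Y Z (Sum.inr (Sum.inl b)) (Sum.inr (Sum.inr w')) = Y b w' := rfl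
lemma blockH_rl (w a') : blockH X P Y Z (Sum.inr (Sum.inr w)) (Sum.inl a') = 0 := rfl
lemma blockH_rm (w b') : blockH X P Y Z (Sum.inr (Sum.inr w)) (Sum.inr (Sum.inl b')) = 0 := rfl
lemma blockH_rr (w w') : blockH X P Y Z (Sum.inr (Sum.inr w)) (Sum.inr (Sum.inr w')) = 0 := rfl

end blockHapp

lemma bd_circ_apply {t : ℕ} {ns : Fin t → ℕ} (p p' : (i : Fin t) × Fin (ns i)) :
    (blockDiagonal' fun i => circ (ns i)) p p' =
      if p' = ⟨p.1, nextF p.2⟩ then 1 else 0 := by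
  obtain ⟨i, u⟩ := p
  obtain ⟨j, v⟩ := p'
  rcases eq_or_ne i j with rfl | hij
  · rw [blockDiagonal'_apply_eq, circ_apply]
    by_cases hv : v = nextF u
    · rw [if_pos hv, if_pos (by rw [hv])]
    · have hcond : ¬((⟨i, v⟩ : (i : Fin t) × Fin (ns i)) = ⟨i, nextF u⟩) :=
        fun h => hv (sigma_mk_injective (β := fun i => Fin (ns i)) h)
      rw [if_neg hv, if_neg hcond]
  · rw [blockDiagonal'_apply_ne _ _ _ hij,
      if_neg (fun h => hij (congrArg Sigma.fst h).symm)]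

lemma exists_pos_term {n : ℕ} {g h : Fin n → ℤ} (hg : ∀ t, 0 ≤ g t) (hh : ∀ t, 0 ≤ h t)
    (hs : 1 ≤ ∑ t, g t * h t) : ∃ t, 1 ≤ g t ∧ 1 ≤ h t := by
  by_contra hc
  push_neg at hc
  have : ∀ t ∈ Finset.univ, g t * h t = 0 := by
    intro t _
    have h1 := hg t
    have h2 := hh t
    rcases lt_or_ge (g t) 1 with hlt | hge
    · have : g t = 0 := by omega
      rw [this, zero_mul]
    · have := hc t hge
      have : h t = 0 := by omega
      rw [this, mul_zero]
  rw [Finset.sum_eq_zero this] at hs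
  omega

lemma forward_dir {n k : ℕ} (hk : 2 ≤ k) (A : Matrix (Fin n) (Fin n) ℤ)
    (h01 : IsZeroOne A) (hA : A ^ k = A) :
    ∃ (r s t : ℕ) (ns : Fin t → ℕ), (∀ i, ns i ∣ k - 1) ∧
      ∃ (X : Matrix (Fin r) ((i : Fin t) × Fin (ns i)) ℤ)
        (Y : Matrix ((i : Fin t) × Fin (ns i)) (Fin s) ℤ),
        IsZeroOne X ∧ IsZeroOne Y ∧
        IsZeroOne (X * (Matrix.blockDiagonal' fun i => circ (ns i))ᵀ * Y) ∧
        ∃ e : Fin n ≃ (Fin r ⊕ ((i : Fin t) × Fin (ns i)) ⊕ Fin s),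
          ∀ i j, A i j =
            blockH X (Matrix.blockDiagonal' fun i => circ (ns i)) Y
              (X * (Matrix.blockDiagonal' fun i => circ (ns i))ᵀ * Y) (e i) (e j) := by
  classical
  set q := k - 1 with hqdef
  have hq1 : 1 ≤ q := by omega
  have hAnn : ∀ i j, 0 ≤ A i j := zo_nonneg h01
  set N := q * n.factorial with hNdef
  have hfac1 : 1 ≤ n.factorial := Nat.one_le_iff_ne_zero.mpr (Nat.factorial_ne_zero n)
  have hN1 : 1 ≤ N := Nat.one_le_iff_ne_zero.mpr (by positivity)
  have hAN : A ^ (N + 1) = A := by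
    have := pow_periodic hk hA n.factorial
    rwa [show 1 + n.factorial * (k-1) = N + 1 by rw [hNdef, hqdef]; ring] at this
  set B := A ^ N with hBdef
  have hBnn : ∀ i j, 0 ≤ B i j := pow_entry_nonneg hAnn N
  have hBB : B * B = B := by
    rw [hBdef, ← pow_add]
    have : N + N = (N - 1) + (N + 1) := by omega
    rw [this, pow_add, hAN, ← pow_succ]
    congr 1
    omega
  have hAB : A * B = A := by
    show A * A ^ N = A
    rw [← pow_succ']
    exact hAN
  have hBA : B * A = A := by
    show A ^ N * A = A
    rw [← pow_succ]
    exact hAN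
  have hBdiag : ∀ i, B i i = 0 ∨ B i i = 1 := by
    intro i
    have h1 : (B * B) i i = B i i := by rw [hBB]
    rw [mul_apply] at h1
    have h2 : B i i * B i i ≤ ∑ t, B i t * B t i :=
      Finset.single_le_sum (f := fun t => B i t * B t i)
        (fun t _ => mul_nonneg (hBnn i t) (hBnn t i)) (Finset.mem_univ i)
    have h0 := hBnn i i
    have hle : B i i ≤ 1 := by nlinarith
    omega
  -- recurrent set characterization
  have hloopR : ∀ (x : Fin n) (c : ℕ), 1 ≤ c → c ≤ n → 1 ≤ (A ^ c) x x → B x x = 1 := by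
    intro x c hc1 hcn hcx
    have hcd : c ∣ N := Dvd.dvd.mul_left (Nat.dvd_factorial hc1 hcn) q
    obtain ⟨m, hm⟩ := hcd
    have := mpow_iterate hAnn hcx m
    rw [← hm] at this
    rcases hBdiag x with h | h
    · rw [hBdef] at h; omega
    · exact h
  have hRloop : ∀ x : Fin n, B x x = 1 → ∃ c, 1 ≤ c ∧ c ≤ n ∧ c ∣ N ∧ 1 ≤ (A ^ c) x x := by
    intro x hx
    have h1 : 1 ≤ (A ^ N) x x := by rw [← hBdef, hx]
    obtain ⟨c, hc1, hcn, hcx⟩ := short_loop hAnn N hN1 h1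
    exact ⟨c, hc1, hcn, Dvd.dvd.mul_left (Nat.dvd_factorial hc1 hcn) q, hcx⟩
  -- F4
  have hF4 : ∀ j : Fin n, B j j = 0 → ∀ u w, 1 ≤ A u j → 1 ≤ A j w → False := by
    intro j hjj u w hu hw
    have h1 : 1 ≤ (A * B) u j := by rw [hAB]; exact hu
    rw [mul_apply] at h1
    have h2 : ∃ t, 1 ≤ A u t ∧ 1 ≤ B t j :=
      exists_pos_term (fun t => hAnn u t) (fun t => hBnn t j) h1
    have h3 : 1 ≤ (B * A) j w := by rw [hBA]; exact hw
    rw [mul_apply] at h3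
    have h4 : ∃ t, 1 ≤ B j t ∧ 1 ≤ A t w :=
      exists_pos_term (fun t => hBnn j t) (fun t => hAnn t w) h3
    obtain ⟨t1, _, ht1⟩ := h2
    obtain ⟨t2, ht2, _⟩ := h4
    exact flor hBnn hBB hBdiag hjj ht1 ht2

  have hedge : ∀ x j : Fin n, 1 ≤ A x j → A x j = 1 := by
    intro x j h
    rcases h01 x j with h0 | h0
    · omega
    · exact h0
  have hsucc_ex : ∀ x : Fin n, ∃ y : Fin n, B x x = 1 →
      B y y = 1 ∧ A x y = 1 ∧ ∀ j, 1 ≤ A x j → B j j = 1 → j = y := by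
    intro x
    by_cases hx : B x x = 1
    · obtain ⟨c, hc1, hcn, hcd, hcx⟩ := hRloop x hx
      obtain ⟨f, hf0, hfc, hchain⟩ := chain_of_pow hAnn hcx
      obtain ⟨m, hm⟩ := hcd
      have hm1 : 1 ≤ m := by
        rcases Nat.eq_zero_or_pos m with rfl | h
        · omega
        · omega
      refine ⟨f 1, fun _ => ⟨?_, ?_, ?_⟩⟩
      · have h1 : 1 ≤ (A ^ (c - 1)) (f 1) (f c) := by
          have := pow_of_chain hAnn hchain 1 c hc1 le_rfl
          exact this
        have h2 : 1 ≤ A (f c) (f 1) := by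
          rw [hfc, ← hf0]
          exact hchain 0 hc1
        have h3 := pow_comp hAnn h1 (by rwa [pow_one] : 1 ≤ (A^1) (f c) (f 1))
        rw [show c - 1 + 1 = c by omega] at h3
        exact hloopR (f 1) c hc1 hcn h3
      · rw [← hf0]
        exact hedge _ _ (hchain 0 hc1)
      · intro j hj hjR
        by_contra hne
        have hz := rigid_AB h01 hAB hBnn (hedge _ _ hj) hjR (f 1)
          (fun h => hne h.symm)
        have hw1 : 1 ≤ (A ^ (c - 1)) (f 1) x := by
          have := pow_of_chain hAnn hchain 1 c hc1 le_rfl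
          rwa [hfc] at this
        have hloop : 1 ≤ (A ^ (c * (m - 1))) x x := mpow_iterate hAnn hcx (m - 1)
        have t1 := pow_comp hAnn hw1 hloop
        have t2 := pow_comp hAnn t1 (by rwa [pow_one] : 1 ≤ (A^1) x j)
        have e1 : c * (m - 1) + c = c * m := by
          rw [← Nat.mul_succ]
          congr 1
          omega
        have hexp : c - 1 + c * (m - 1) + 1 = N := by omega
        rw [hexp] at t2
        have t3 : 1 ≤ B (f 1) j := t2
        have hax : A x (f 1) = 1 := by rw [← hf0]; exact hedge _ _ (hchain 0 hc1)
        rw [hax, one_mul] at hz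
        omega
    · exact ⟨x, fun h => absurd h hx⟩
  choose σf hσf using hsucc_ex
  have hσR : ∀ x, B x x = 1 → B (σf x) (σf x) = 1 ∧ A x (σf x) = 1 :=
    fun x hx => ⟨(hσf x hx).1, (hσf x hx).2.1⟩
  have hσu : ∀ x, B x x = 1 → ∀ j, 1 ≤ A x j → B j j = 1 → j = σf x :=
    fun x hx => (hσf x hx).2.2
  have hinj : ∀ y x1 x2 : Fin n, B y y = 1 → B x1 x1 = 1 → B x2 x2 = 1 →
      1 ≤ A x1 y → 1 ≤ A x2 y → x1 = x2 := by
    intro y x1 x2 hy hx1 hx2 h1 h2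
    obtain ⟨c, hc1, hcn, hcd, hcy⟩ := hRloop y hy
    obtain ⟨g, hg0, hgc, hchain⟩ := chain_of_pow hAnn hcy
    obtain ⟨m, hm⟩ := hcd
    have hm1 : 1 ≤ m := by
      rcases Nat.eq_zero_or_pos m with rfl | h
      · omega
      · omega
    have hkey : ∀ x, B x x = 1 → 1 ≤ A x y → x = g (c - 1) := by
      intro x hx hxy
      by_contra hne
      have hz := rigid_BA h01 hBA hBnn (hedge _ _ hxy) hx (g (c-1))
        (fun h => hne h.symm)
      have w1 : 1 ≤ (A^1) x y := by rwa [pow_one]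
      have w2 : 1 ≤ (A ^ (c * (m-1))) y y := mpow_iterate hAnn hcy (m - 1)
      have w3 : 1 ≤ (A ^ (c - 1 - 0)) (g 0) (g (c-1)) :=
        pow_of_chain hAnn hchain 0 (c-1) (by omega) (by omega)
      rw [hg0] at w3
      have t1 := pow_comp hAnn w1 w2
      have t2 := pow_comp hAnn t1 w3
      have e1 : c * (m - 1) + c = c * m := by
        rw [← Nat.mul_succ]
        congr 1
        omega
      have hexp : 1 + c * (m-1) + (c - 1 - 0) = N := by omega
      rw [hexp] at t2
      have t3 : 1 ≤ B x (g (c-1)) := t2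
      have hedge2 : A (g (c-1)) y = 1 := by
        have h5 := hchain (c-1) (by omega)
        rw [show c - 1 + 1 = c by omega, hgc] at h5
        exact hedge _ _ h5
      rw [hedge2, mul_one] at hz
      omega
    rw [hkey x1 hx1 h1, hkey x2 hx2 h2]
  have hσq : ∀ x, B x x = 1 → σf^[q] x = x := by
    intro x hx
    have hA1q : A ^ (1 + q) = A := by
      have := pow_periodic hk hA 1
      rwa [one_mul] at this
    have h1 : 1 ≤ (A ^ (1 + q)) x (σf x) := by
      rw [hA1q, (hσR x hx).2]
    obtain ⟨f, hf0, hfe, hchain⟩ := chain_of_pow hAnn h1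
    have hiR : ∀ i, i ≤ 1 + q → B (f i) (f i) = 1 := by
      intro i
      induction i with
      | zero => intro _; rwa [hf0]
      | succ i ih =>
          intro hi
          rcases Nat.lt_or_ge (i+1) (1+q) with hlt | hge
          · have hin : 1 ≤ A (f i) (f (i+1)) := hchain i (by omega)
            have hout : 1 ≤ A (f (i+1)) (f (i+2)) := hchain (i+1) (by omega)
            rcases hBdiag (f (i+1)) with h0 | h0
            · exact absurd (hF4 (f (i+1)) h0 (f i) (f (i+2)) hin hout) not_false
            · exact h0
          · have hieq : i + 1 = 1 + q := by omega
            rw [hieq, hfe]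
            exact (hσR x hx).1
    have hstep : ∀ i, i ≤ 1 + q → f i = σf^[i] x := by
      intro i
      induction i with
      | zero => intro _; rw [hf0]; rfl
      | succ i ih =>
          intro hi
          have hfi := ih (by omega)
          have h6 := hσu (f i) (hiR i (by omega)) (f (i+1)) (hchain i (by omega))
            (hiR (i+1) hi)
          rw [h6, hfi, ← Function.iterate_succ_apply' σf i x]
    have hlast : σf (σf^[q] x) = σf x := by
      have h7 : σf^[1+q] x = σf x := by rw [← hstep (1+q) le_rfl, hfe]
      rwa [Function.iterate_add_apply σf 1 q x, Function.iterate_one] at h7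
    have hqR : B (σf^[q] x) (σf^[q] x) = 1 := by
      rw [← hstep q (by omega)]
      exact hiR q (by omega)
    have e1 : 1 ≤ A (σf^[q] x) (σf x) := by
      rw [← hlast]
      exact le_of_eq ((hσR (σf^[q] x) hqR).2).symm
    have e2 : 1 ≤ A x (σf x) := le_of_eq ((hσR x hx).2).symm
    exact hinj (σf x) (σf^[q] x) x (hσR x hx).1 hqR hx e1 e2

  -- sinks have no out-edges
  have hTout : ∀ j : Fin n, ¬ (B j j = 1) → ¬ (∀ u, A u j = 0) → ∀ w, A j w = 0 := by
    intro j hjR hin w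
    rcases h01 j w with h | h
    · exact h
    · exfalso
      push_neg at hin
      obtain ⟨u, hu⟩ := hin
      have hu1 : 1 ≤ A u j := by
        rcases h01 u j with h' | h'
        · exact absurd h' hu
        · omega
      have hj0 : B j j = 0 := by
        rcases hBdiag j with h' | h'
        · exact h'
        · exact absurd h' hjR
      exact hF4 j hj0 u w hu1 (by omega)
  -- subtypes
  let StT := {i : Fin n // ¬ (B i i = 1) ∧ ∀ u, A u i = 0}
  let RtT := {i : Fin n // B i i = 1}
  let TtT := {i : Fin n // ¬ (B i i = 1) ∧ ¬ (∀ u, A u i = 0)}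
  let σR : RtT → RtT := fun x => ⟨σf x.val, (hσR x.val x.prop).1⟩
  have hσRit : ∀ (m : ℕ) (x : RtT), (σR^[m] x).val = σf^[m] x.val := by
    intro m
    induction m with
    | zero => intro x; rfl
    | succ m ih =>
        intro x
        rw [Function.iterate_succ_apply, Function.iterate_succ_apply]
        exact ih (σR x)
  have hσRq : ∀ x : RtT, σR^[q] x = x := by
    intro x
    apply Subtype.ext
    rw [hσRit]
    exact hσq x.val x.prop
  have hσRinj : Function.Injective σR := by
    intro x1 x2 h
    have hval : σf x1.val = σf x2.val := congrArg Subtype.val h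
    apply Subtype.ext
    refine hinj (σf x1.val) x1.val x2.val (hσR x1.val x1.prop).1 x1.prop x2.prop
      (le_of_eq ((hσR x1.val x1.prop).2).symm) ?_
    rw [hval]
    exact le_of_eq ((hσR x2.val x2.prop).2).symm
  have hperiodic : ∀ x : RtT, Function.IsPeriodicPt σR q x := fun x => hσRq x
  have hcpos : ∀ x : RtT, 0 < Function.minimalPeriod σR x :=
    fun x => (hperiodic x).minimalPeriod_pos (by omega)
  have hcdvd : ∀ x : RtT, Function.minimalPeriod σR x ∣ q :=
    fun x => (hperiodic x).minimalPeriod_dvd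
  have hcit : ∀ x : RtT, σR^[Function.minimalPeriod σR x] x = x :=
    fun x => Function.iterate_minimalPeriod
  have hcmul : ∀ (x : RtT) (m : ℕ), σR^[Function.minimalPeriod σR x * m] x = x := by
    intro x m
    induction m with
    | zero => rfl
    | succ m ih =>
        rw [Nat.mul_succ, Function.iterate_add_apply, hcit, ih]
  have huniq : ∀ (a : RtT) (u v : ℕ), u < Function.minimalPeriod σR a →
      v < Function.minimalPeriod σR a → σR^[u] a = σR^[v] a → u = v := by
    intro a u v hu hv heq2
    have key : ∀ u v : ℕ, u < v → v < Function.minimalPeriod σR a →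
        σR^[u] a = σR^[v] a → False := by
      intro u' v' huv hv2 heq3
      have h8 : σR^[u'] (σR^[v' - u'] a) = σR^[u'] a := by
        rw [← Function.iterate_add_apply]
        rw [show u' + (v' - u') = v' by omega]
        exact heq3.symm
      have h9 : σR^[v' - u'] a = a := (hσRinj.iterate u') h8
      have h10 : Function.IsPeriodicPt σR (v' - u') a := h9
      have := h10.minimalPeriod_le (by omega)
      omega
    rcases Nat.lt_trichotomy u v with h | h | h
    · exact absurd (key u v h hv heq2) not_false
    · exact h
    · exact absurd (key v u h hu heq2.symm) not_false
  -- orbit quotient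
  let st : Setoid RtT :=
    { r := fun a b => ∃ m : ℕ, σR^[m] a = b
      iseqv := by
        have hqmul : ∀ (x : RtT) (m : ℕ), σR^[q * m] x = x := by
          intro x m
          induction m with
          | zero => rfl
          | succ m ih => rw [Nat.mul_succ, Function.iterate_add_apply, hσRq, ih]
        constructor
        · exact fun a => ⟨0, rfl⟩
        · rintro a b ⟨m, rfl⟩
          refine ⟨m * (q - 1), ?_⟩
          rw [← Function.iterate_add_apply]
          rw [show m * (q - 1) + m = q * m from by
            rw [← Nat.mul_succ, show (q - 1).succ = q by omega, Nat.mul_comm]]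
          exact hqmul a m
        · rintro a b c ⟨m1, rfl⟩ ⟨m2, rfl⟩
          exact ⟨m2 + m1, Function.iterate_add_apply σR m2 m1 a⟩ }
  letI : DecidableRel st.r := fun a b => Classical.propDecidable _
  let Q := Quotient st
  let t : ℕ := Fintype.card Q
  let eQ : Q ≃ Fin t := Fintype.equivFin Q
  let ns : Fin t → ℕ := fun i => Function.minimalPeriod σR (eQ.symm i).out
  have hns_dvd : ∀ i, ns i ∣ q := fun i => hcdvd _
  -- the cycle-structure equivalence
  let GG : ((i : Fin t) × Fin (ns i)) → RtT := fun p => σR^[p.2.val] (eQ.symm p.1).out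
  have hGGclass : ∀ p, Quotient.mk st (GG p) = eQ.symm p.1 := by
    intro p
    have h1 : Quotient.mk st ((eQ.symm p.1).out) = Quotient.mk st (GG p) :=
      Quotient.sound ⟨p.2.val, rfl⟩
    rw [← h1, Quotient.out_eq]
  have hGGinj : Function.Injective GG := by
    rintro ⟨i1, u1⟩ ⟨i2, u2⟩ h
    have hi : i1 = i2 := by
      have := hGGclass ⟨i1, u1⟩
      rw [h, hGGclass ⟨i2, u2⟩] at this
      exact eQ.symm.injective this.symm
    subst hi
    have hu : u1.val = u2.val := huniq _ _ _ u1.isLt u2.isLt h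
    congr 1
    exact Fin.ext hu
  have hGGsurj : Function.Surjective GG := by
    intro b
    have hrel : st.r (eQ.symm (eQ (Quotient.mk st b))).out b := by
      rw [eQ.symm_apply_apply]
      exact Quotient.mk_out b
    obtain ⟨m, hm⟩ := hrel
    set c := ns (eQ (Quotient.mk st b)) with hcdef
    have hc0 : 0 < c := hcpos _
    refine ⟨⟨eQ (Quotient.mk st b), ⟨m % c, Nat.mod_lt _ hc0⟩⟩, ?_⟩
    show σR^[m % c] (eQ.symm (eQ (Quotient.mk st b))).out = b
    have h20 : σR^[m % c + c * (m / c)] ((eQ.symm (eQ (Quotient.mk st b))).out) = b := by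
      rw [Nat.mod_add_div]
      exact hm
    rw [Function.iterate_add_apply] at h20
    rwa [hcmul] at h20
  let gE : RtT ≃ ((i : Fin t) × Fin (ns i)) := (Equiv.ofBijective GG ⟨hGGinj, hGGsurj⟩).symm
  have hGEinv : ∀ x, GG (gE x) = x := fun x =>
    (Equiv.ofBijective GG ⟨hGGinj, hGGsurj⟩).apply_symm_apply x
  have hGGnext : ∀ p : ((i : Fin t) × Fin (ns i)),
      GG ⟨p.1, nextF p.2⟩ = σR (GG p) := by
    rintro ⟨i, u⟩
    show σR^[((u : ℕ) + 1) % ns i] (eQ.symm i).out = σR (σR^[u.val] (eQ.symm i).out)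
    rw [show σR (σR^[(u : ℕ)] (eQ.symm i).out) = σR^[(u : ℕ) + 1] (eQ.symm i).out from
      (Function.iterate_succ_apply' σR _ _).symm]
    rcases Nat.lt_or_ge ((u : ℕ) + 1) (ns i) with hlt | hge
    · rw [Nat.mod_eq_of_lt hlt]
    · have heq5 : (u : ℕ) + 1 = ns i := by have := u.isLt; omega
      rw [heq5, Nat.mod_self, ← heq5]
      rw [heq5]
      exact (hcit _).symm
  have hgnext : ∀ x : RtT, gE (σR x) = ⟨(gE x).1, nextF (gE x).2⟩ := by
    intro x
    apply hGGinj
    rw [hGEinv, hGGnext, hGEinv]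
  -- R-edge characterization
  have hAR : ∀ x y : RtT, A x.val y.val = if y = σR x then 1 else 0 := by
    intro x y
    by_cases h : y = σR x
    · rw [if_pos h, h]
      exact (hσR x.val x.prop).2
    · rw [if_neg h]
      rcases h01 x.val y.val with h0 | h0
      · exact h0
      · exfalso
        apply h
        apply Subtype.ext
        exact hσu x.val x.prop y.val (by omega) y.prop
  -- partition equivalence
  let r : ℕ := Fintype.card StT
  let s : ℕ := Fintype.card TtT
  let eS : StT ≃ Fin r := Fintype.equivFin StT
  let eT : TtT ≃ Fin s := Fintype.equivFin TtT
  let FF : (StT ⊕ RtT ⊕ TtT) → Fin n :=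
    Sum.elim Subtype.val (Sum.elim Subtype.val Subtype.val)
  have hFFinj : Function.Injective FF := by
    rintro (a | b | c) (a' | b' | c') h <;> simp only [FF, Sum.elim_inl, Sum.elim_inr] at h
    · exact congrArg Sum.inl (Subtype.ext h)
    · exact absurd (by rw [h]; exact b'.prop) a.prop.1
    · exact absurd (fun u => by rw [← h]; exact a.prop.2 u) c'.prop.2
    · exact absurd (by rw [← h]; exact b.prop) a'.prop.1
    · exact congrArg (fun z => Sum.inr (Sum.inl z)) (Subtype.ext h)
    · exact absurd (by rw [← h]; exact b.prop) c'.prop.1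
    · exact absurd (fun u => by rw [h]; exact a'.prop.2 u) c.prop.2
    · exact absurd (by rw [h]; exact b'.prop) c.prop.1
    · exact congrArg (fun z => Sum.inr (Sum.inr z)) (Subtype.ext h)
  have hFFsurj : Function.Surjective FF := by
    intro i
    by_cases hR : B i i = 1
    · exact ⟨Sum.inr (Sum.inl ⟨i, hR⟩), rfl⟩
    · by_cases hS : ∀ u, A u i = 0
      · exact ⟨Sum.inl ⟨i, hR, hS⟩, rfl⟩
      · exact ⟨Sum.inr (Sum.inr ⟨i, hR, hS⟩), rfl⟩
  let E : (StT ⊕ RtT ⊕ TtT) ≃ Fin n := Equiv.ofBijective FF ⟨hFFinj, hFFsurj⟩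
  let ee : (Fin r ⊕ ((i : Fin t) × Fin (ns i)) ⊕ Fin s) ≃ Fin n :=
    (Equiv.sumCongr eS (Equiv.sumCongr gE eT)).symm.trans E
  let e : Fin n ≃ (Fin r ⊕ ((i : Fin t) × Fin (ns i)) ⊕ Fin s) := ee.symm
  have hee1 : ∀ a, ee (Sum.inl a) = (eS.symm a).val := fun a => rfl
  have hee2 : ∀ b, ee (Sum.inr (Sum.inl b)) = (gE.symm b).val := fun b => rfl
  have hee3 : ∀ w, ee (Sum.inr (Sum.inr w)) = (eT.symm w).val := fun w => rfl
  -- matrices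
  let P : Matrix ((i : Fin t) × Fin (ns i)) ((i : Fin t) × Fin (ns i)) ℤ :=
    Matrix.blockDiagonal' fun i => circ (ns i)
  let X : Matrix (Fin r) ((i : Fin t) × Fin (ns i)) ℤ :=
    fun a b => A (ee (Sum.inl a)) (ee (Sum.inr (Sum.inl b)))
  let Y : Matrix ((i : Fin t) × Fin (ns i)) (Fin s) ℤ :=
    fun b w => A (ee (Sum.inr (Sum.inl b))) (ee (Sum.inr (Sum.inr w)))
  let Z0 : Matrix (Fin r) (Fin s) ℤ :=
    fun a w => A (ee (Sum.inl a)) (ee (Sum.inr (Sum.inr w)))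
  let H0 : Matrix _ _ ℤ := A.submatrix ee ee
  have hH0 : H0 = blockH X P Y Z0 := by
    ext p p'
    rcases p' with a' | b' | w'
    · -- column in S : zero
      show A (ee p) (eS.symm a').val = blockH X P Y Z0 p (Sum.inl a')
      rw [(eS.symm a').prop.2 (ee p)]
      rcases p with a | b | w <;> rfl
    · rcases p with a | b | w
      · rfl
      · -- R-R block
        show A (gE.symm b).val (gE.symm b').val = blockH X P Y Z0 _ _
        have hP1 : blockH X P Y Z0 (Sum.inr (Sum.inl b)) (Sum.inr (Sum.inl b')) =
            P b b' := rfl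
        rw [hP1, hAR (gE.symm b) (gE.symm b')]
        show _ = (blockDiagonal' fun i => circ (ns i)) b b'
        rw [bd_circ_apply]
        congr 1
        have hnb : (⟨b.1, nextF b.2⟩ : (i : Fin t) × Fin (ns i)) = gE (σR (gE.symm b)) := by
          rw [hgnext (gE.symm b)]
          congr 1 <;> rw [Equiv.apply_symm_apply]
        rw [hnb]
        exact propext (gE.symm_apply_eq)
      · -- row in T : zero
        show A (eT.symm w).val _ = blockH X P Y Z0 _ _
        rw [hTout (eT.symm w).val (eT.symm w).prop.1 (eT.symm w).prop.2]
        rfl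
    · rcases p with a | b | w
      · rfl
      · rfl
      · show A (eT.symm w).val _ = blockH X P Y Z0 _ _
        rw [hTout (eT.symm w).val (eT.symm w).prop.1 (eT.symm w).prop.2]
        rfl
  -- transport A^k = A
  have hH0k : H0 ^ k = H0 := by
    show (A.submatrix ee ee) ^ k = A.submatrix ee ee
    rw [submatrix_pow_equiv, hA]
  have hP1 : P ^ q = 1 := circP_pow_eq_one hq1 hns_dvd
  have hPt : P * Pᵀ = 1 := circP_mul_transpose
  have hHk := blockH_pow_eq X P Y Z0 hq1 hP1 hPt
  have hkq : k = q + 1 := by omega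
  have hZeq : Z0 = X * Pᵀ * Y := by
    have h := hH0k
    rw [hH0, hkq, hHk] at h
    ext a w
    have h2 := congrFun (congrFun h (Sum.inl a)) (Sum.inr (Sum.inr w))
    rw [blockH_lr, blockH_lr] at h2
    exact h2.symm
  refine ⟨r, s, t, ns, hns_dvd, X, Y, fun a b => h01 _ _, fun b w => h01 _ _, ?_, e, ?_⟩
  · show IsZeroOne (X * Pᵀ * Y)
    rw [← hZeq]
    exact fun a w => h01 _ _
  · intro i j
    show A i j = blockH X P Y (X * Pᵀ * Y) (e i) (e j)
    rw [← hZeq, ← hH0]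
    show A i j = A (ee (ee.symm i)) (ee (ee.symm j))
    rw [Equiv.apply_symm_apply, Equiv.apply_symm_apply]

theorem stmt7 {n k : ℕ} (hk : 2 ≤ k) (A : Matrix (Fin n) (Fin n) ℤ)
    (h01 : IsZeroOne A) :
    A ^ k = A ↔
      A = 0 ∨
      ∃ (r s t : ℕ) (ns : Fin t → ℕ), (∀ i, ns i ∣ k - 1) ∧
        ∃ (X : Matrix (Fin r) ((i : Fin t) × Fin (ns i)) ℤ)
          (Y : Matrix ((i : Fin t) × Fin (ns i)) (Fin s) ℤ),
          IsZeroOne X ∧ IsZeroOne Y ∧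
          IsZeroOne (X * (Matrix.blockDiagonal' fun i => circ (ns i))ᵀ * Y) ∧
          ∃ e : Fin n ≃ (Fin r ⊕ ((i : Fin t) × Fin (ns i)) ⊕ Fin s),
            ∀ i j, A i j =
              blockH X (Matrix.blockDiagonal' fun i => circ (ns i)) Y
                (X * (Matrix.blockDiagonal' fun i => circ (ns i))ᵀ * Y) (e i) (e j) := by
  constructor
  · intro hA
    exact Or.inr (forward_dir hk A h01 hA)
  · rintro (rfl | ⟨r, s, t, ns, hns, X, Y, hX, hY, hZ, e, he⟩)
    · rw [zero_pow (by omega : k ≠ 0)]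
    · exact backward_dir hk A r s t ns hns X Y e he
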